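/- Let 0 < α < 1 with (1/α − 1)² < 1/λ₁² for λ₁ ≥ 1. For fixed θ ∈ ℝ define h(s) = log[1 + √s + e^θ(1 + 1/√s)] for s ∈ ((1/α−1)², 1/λ₁²). Then inf_s h(s) equals: log(e^θ/(1−α) + 1/α) if θ ≤ 2 log(1/α − 1); log(1 + e^{θ/2})² if 2 log(1/α−1) < θ ≤ −2 log λ₁; and log(1 + λ₁ e^θ) + log(1 + 1/λ₁) if θ > −2 log λ₁. -/
import Mathlib

open Real Set in
lemma aux_inf (φ : ℝ → ℝ) (a b m : ℝ) (hab : a < b) (hm : m ∈ Set.Icc a b)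
    (hcont : ContinuousOn φ (Set.Icc a b))
    (hmin : ∀ t ∈ Set.Icc a b, φ m ≤ φ t) :
    sInf (φ '' Set.Ioo a b) = φ m := by
  have hne : (Set.Ioo a b).Nonempty := Set.nonempty_Ioo.2 hab
  have hneI : (φ '' Set.Ioo a b).Nonempty := hne.image φ
  have hbdd : BddBelow (φ '' Set.Ioo a b) := by
    refine ⟨φ m, ?_⟩
    rintro y ⟨t, ht, rfl⟩
    exact hmin t (Set.Ioo_subset_Icc_self ht)
  have hlow : φ m ≤ sInf (φ '' Set.Ioo a b) := by
    refine le_csInf hneI ?_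
    rintro y ⟨t, ht, rfl⟩
    exact hmin t (Set.Ioo_subset_Icc_self ht)
  have hclos : φ m ∈ closure (φ '' Set.Ioo a b) := by
    have h1 : φ '' closure (Set.Ioo a b) ⊆ closure (φ '' Set.Ioo a b) := by
      apply ContinuousOn.image_closure
      rwa [closure_Ioo hab.ne]
    have h2 : φ m ∈ φ '' closure (Set.Ioo a b) := by
      rw [closure_Ioo hab.ne]; exact ⟨m, hm, rfl⟩
    exact h1 h2
  have hglb := isGLB_csInf hneI hbdd
  have hup : sInf (φ '' Set.Ioo a b) ≤ φ m := by
    have : sInf (φ '' Set.Ioo a b) ∈ lowerBounds (closure (φ '' Set.Ioo a b)) := by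
      rw [lowerBounds_closure]; exact hglb.1
    exact this hclos
  exact le_antisymm hup hlow

open Real in
theorem stmt_14 (α lam1 θ : ℝ) (hα0 : 0 < α) (hα1 : α < 1) (hlam : 1 ≤ lam1)
    (hwin : (1 / α - 1) ^ 2 < 1 / lam1 ^ 2)
    (h : ℝ → ℝ)
    (hh : ∀ s : ℝ, h s = log (1 + sqrt s + exp θ * (1 + 1 / sqrt s))) :
    sInf (h '' Set.Ioo ((1 / α - 1) ^ 2) (1 / lam1 ^ 2)) =
      if θ ≤ 2 * log (1 / α - 1) then log (exp θ / (1 - α) + 1 / α)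
      else if θ ≤ -2 * log lam1 then log ((1 + exp (θ / 2)) ^ 2)
      else log (1 + lam1 * exp θ) + log (1 + 1 / lam1) := by
  set A := 1 / α - 1 with hA
  set B := 1 / lam1 with hB
  have hlam0 : (0:ℝ) < lam1 := lt_of_lt_of_le one_pos hlam
  have hA0 : 0 < A := by
    rw [hA, sub_pos, lt_div_iff₀ hα0, one_mul]
    exact hα1
  have hB0 : 0 < B := by positivity
  have hBsq : 1 / lam1 ^ 2 = B ^ 2 := by rw [hB]; ring
  have hAB : A < B := by
    rw [hBsq] at hwin
    nlinarith
  set φ : ℝ → ℝ := fun t => log (1 + t + exp θ * (1 + 1 / t)) with hφ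
  -- image equality
  have himg : h '' Set.Ioo (A ^ 2) (B ^ 2) = φ '' Set.Ioo A B := by
    ext y
    constructor
    · rintro ⟨s, ⟨hs1, hs2⟩, rfl⟩
      have hs0 : 0 < s := lt_of_le_of_lt (by positivity) hs1
      refine ⟨Real.sqrt s, ⟨?_, ?_⟩, ?_⟩
      · have := Real.sqrt_lt_sqrt (by positivity) hs1
        rwa [Real.sqrt_sq hA0.le] at this
      · have := Real.sqrt_lt_sqrt hs0.le hs2
        rwa [Real.sqrt_sq hB0.le] at this
      · rw [hφ, hh]
    · rintro ⟨t, ⟨ht1, ht2⟩, rfl⟩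
      have ht0 : 0 < t := lt_trans hA0 ht1
      refine ⟨t ^ 2, ⟨?_, ?_⟩, ?_⟩
      · exact pow_lt_pow_left₀ ht1 hA0.le (by norm_num)
      · exact pow_lt_pow_left₀ ht2 ht0.le (by norm_num)
      · rw [hh, Real.sqrt_sq ht0.le]
  rw [hBsq, himg]
  -- continuity
  have hcont : ContinuousOn φ (Set.Icc A B) := by
    have hsub : ∀ t ∈ Set.Icc A B, (0:ℝ) < t := fun t ht => lt_of_lt_of_le hA0 ht.1
    apply ContinuousOn.log
    · apply ContinuousOn.add
      · exact (continuousOn_const.add continuousOn_id)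
      · apply ContinuousOn.mul continuousOn_const
        apply ContinuousOn.add continuousOn_const
        exact ContinuousOn.div continuousOn_const continuousOn_id
          (fun t ht => (hsub t ht).ne')
    · intro t ht
      have ht0 := hsub t ht
      positivity
  -- fraction rewriting helper
  have hfrac : ∀ t : ℝ, 0 < t → 1 + t + exp θ * (1 + 1 / t)
      = (t + t ^ 2 + exp θ * t + exp θ) / t := by
    intro t ht; field_simp; ring
  have hinnerpos : ∀ t : ℝ, 0 < t → 0 < 1 + t + exp θ * (1 + 1 / t) := by
    intro t ht; positivity
  split_ifs with h1 h2
  · -- case 1: m = A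
    have heA : exp θ ≤ A ^ 2 := by
      have : exp θ ≤ exp (2 * Real.log A) := Real.exp_le_exp.2 h1
      rwa [two_mul, Real.exp_add, Real.exp_log hA0, ← sq] at this
    have hval : φ A = log (exp θ / (1 - α) + 1 / α) := by
      rw [hφ]
      congr 1
      have hα1' : (1:ℝ) - α ≠ 0 := by linarith
      have hAne : A ≠ 0 := hA0.ne'
      rw [hA] at hAne ⊢
      field_simp
      ring
    rw [← hval]
    apply aux_inf φ A B A hAB ⟨le_refl A, hAB.le⟩ hcont
    intro t ht
    have ht0 : 0 < t := lt_of_lt_of_le hA0 ht.1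
    rw [hφ]
    apply Real.log_le_log (hinnerpos A hA0)
    rw [hfrac A hA0, hfrac t ht0, div_le_div_iff₀ hA0 ht0]
    nlinarith [mul_nonneg (sub_nonneg.2 ht.1) (sub_nonneg.2 (le_trans heA (by nlinarith [ht.1, hA0] : A ^ 2 ≤ t * A)))]
  · -- case 2: m = exp (θ/2)
    set u := exp (θ / 2) with hu
    have hu0 : 0 < u := Real.exp_pos _
    have husq : u ^ 2 = exp θ := by
      rw [hu, sq, ← Real.exp_add]; congr 1; ring
    have hmu1 : A ≤ u := by
      have : 2 * Real.log A < θ := not_le.1 h1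
      have hlogA : Real.log A < θ / 2 := by linarith
      have := Real.exp_lt_exp.2 hlogA
      rw [Real.exp_log hA0] at this
      exact this.le
    have hlogB : Real.log B = - Real.log lam1 := by
      rw [hB, one_div, Real.log_inv]
    have hmu2 : u ≤ B := by
      have : θ / 2 ≤ Real.log B := by rw [hlogB]; linarith
      have := Real.exp_le_exp.2 this
      rwa [Real.exp_log hB0] at this
    have hune : u ≠ 0 := hu0.ne'
    have hinner : (1:ℝ) + u + exp θ * (1 + 1 / u) = (1 + u) ^ 2 := by
      rw [← husq]
      field_simp
      ring
    have hval : φ u = log ((1 + u) ^ 2) := by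
      simp only [hφ]
      rw [hinner]
    rw [← hval]
    apply aux_inf φ A B u hAB ⟨hmu1, hmu2⟩ hcont
    intro t ht
    have ht0 : 0 < t := lt_of_lt_of_le hA0 ht.1
    rw [hφ]
    apply Real.log_le_log (hinnerpos u hu0)
    rw [hfrac u hu0, hfrac t ht0, div_le_div_iff₀ hu0 ht0]
    nlinarith [sq_nonneg (t - u), husq]
  · -- case 3: m = B
    have heB : B ^ 2 < exp θ := by
      have hlogB : Real.log B = - Real.log lam1 := by
        rw [hB, one_div, Real.log_inv]
      have h2' : -2 * Real.log lam1 < θ := not_le.1 h2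
      have : 2 * Real.log B < θ := by rw [hlogB]; linarith
      have := Real.exp_lt_exp.2 this
      rwa [two_mul, Real.exp_add, Real.exp_log hB0, ← sq] at this
    have hval : φ B = log (1 + lam1 * exp θ) + log (1 + 1 / lam1) := by
      rw [hφ, ← Real.log_mul (by positivity) (by positivity)]
      congr 1
      rw [hB]
      field_simp
      ring
    rw [← hval]
    apply aux_inf φ A B B hAB ⟨hAB.le, le_refl B⟩ hcont
    intro t ht
    have ht0 : 0 < t := lt_of_lt_of_le hA0 ht.1
    rw [hφ]
    apply Real.log_le_log (hinnerpos B hB0)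
    rw [hfrac B hB0, hfrac t ht0, div_le_div_iff₀ hB0 ht0]
    nlinarith [mul_nonneg (sub_nonneg.2 ht.2) (sub_nonneg.2 (le_trans (by nlinarith [ht.2, hB0, ht0] : t * B ≤ B ^ 2) heB.le))]
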